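/- arXiv:2407.01698 — 2 statements merged into one kernel-verified Lean document; each statement's English description precedes it below -/
import Mathlib

section
/- Subadditivity of the DPP expectation: for n×n symmetric positive semidefinite matrices A and B, D_k(A) + D_k(B) ≥ D_k(A+B) for 0 ≤ k ≤ n, where D_k(M) = Tr[M] − (k+1)e_{k+1}(λ(M))/e_k(λ(M)) and λ(M) is the eigenvalue vector of M. -/
open Matrix BigOperators

/-- The elementary symmetric polynomial of degree `k` in the entries of `x`. -/
noncomputable def esym {n : ℕ} (k : ℕ) (x : Fin n → ℝ) : ℝ :=
  ∑ S ∈ Finset.univ.powersetCard k, ∏ i ∈ S, x i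

/-- The k-DPP expectation of a symmetric PSD matrix `M`:
`D_k(M) = Tr[M] − (k+1) e_{k+1}(λ(M))/e_k(λ(M))` where `λ(M)` is the eigenvalue
vector of `M`. -/
noncomputable def dppExp {n : ℕ} (k : ℕ) (M : Matrix (Fin n) (Fin n) ℝ)
    (hM : M.IsHermitian) : ℝ :=
  M.trace - (k + 1) * esym (k + 1) hM.eigenvalues / esym k hM.eigenvalues

namespace DppAux

set_option linter.unusedSectionVars false

variable {ι : Type*} [DecidableEq ι]

noncomputable def E (r : ℕ) (s : Finset ι) (x : ι → ℝ) : ℝ :=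
  ∑ T ∈ s.powersetCard r, ∏ i ∈ T, x i

lemma E_zero (s : Finset ι) (x : ι → ℝ) : E 0 s x = 1 := by
  simp [E]

lemma E_nonneg {s : Finset ι} {x : ι → ℝ} (hx : ∀ i ∈ s, 0 ≤ x i) (r : ℕ) : 0 ≤ E r s x := by
  apply Finset.sum_nonneg
  intro T hT
  rw [Finset.mem_powersetCard] at hT
  exact Finset.prod_nonneg fun i hi => hx i (hT.1 hi)

lemma E_pos {s : Finset ι} {x : ι → ℝ} (hx : ∀ i ∈ s, 0 < x i) {r : ℕ} (hr : r ≤ s.card) :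
    0 < E r s x := by
  obtain ⟨T, hTs, hTc⟩ := Finset.exists_subset_card_eq hr
  apply Finset.sum_pos'
  · intro T' hT'
    rw [Finset.mem_powersetCard] at hT'
    exact Finset.prod_nonneg fun i hi => (hx i (hT'.1 hi)).le
  · exact ⟨T, Finset.mem_powersetCard.2 ⟨hTs, hTc⟩,
      Finset.prod_pos fun i hi => hx i (hTs hi)⟩

lemma E_erase {s : Finset ι} {i : ι} (hi : i ∈ s) (r : ℕ) (x : ι → ℝ) :
    E (r+1) s x = E (r+1) (s.erase i) x + x i * E r (s.erase i) x := by
  conv_lhs => rw [E, ← Finset.insert_erase hi,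
    Finset.powersetCard_succ_insert (Finset.notMem_erase i s)]
  rw [Finset.sum_union]
  · congr 1
    rw [Finset.sum_image]
    · rw [E, Finset.mul_sum]
      apply Finset.sum_congr rfl
      intro T hT
      rw [Finset.mem_powersetCard] at hT
      rw [Finset.prod_insert (fun h => (Finset.notMem_erase i s) (hT.1 h))]
    · intro T hT T' hT' hTT'
      rw [Finset.mem_coe, Finset.mem_powersetCard] at hT hT'
      have hiT : i ∉ T := fun h => (Finset.notMem_erase i s) (hT.1 h)
      have hiT' : i ∉ T' := fun h => (Finset.notMem_erase i s) (hT'.1 h)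
      have := congrArg (Finset.erase · i) hTT'
      simpa [Finset.erase_insert hiT, Finset.erase_insert hiT'] using this
  · rw [Finset.disjoint_right]
    intro T hT hT2
    rw [Finset.mem_image] at hT
    obtain ⟨T', hT', rfl⟩ := hT
    rw [Finset.mem_powersetCard] at hT2
    exact (Finset.notMem_erase i s) (hT2.1 (Finset.mem_insert_self i T'))

lemma sum_mul_E_erase (s : Finset ι) (r : ℕ) (x : ι → ℝ) :
    ∑ i ∈ s, x i * E r (s.erase i) x = (r+1 : ℝ) * E (r+1) s x := by
  have rhs : (r+1 : ℝ) * E (r+1) s x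
      = ∑ T ∈ s.powersetCard (r+1), ∑ i ∈ T, x i * ∏ j ∈ T.erase i, x j := by
    rw [E, Finset.mul_sum]
    apply Finset.sum_congr rfl
    intro T hT
    rw [Finset.mem_powersetCard] at hT
    rw [Finset.sum_congr rfl (fun i hi => (Finset.mul_prod_erase T x hi))]
    rw [Finset.sum_const, hT.2, nsmul_eq_mul]
    push_cast
    ring
  rw [rhs]
  have lhs : ∑ i ∈ s, x i * E r (s.erase i) x
      = ∑ p ∈ s.sigma (fun i => (s.erase i).powersetCard r), x p.1 * ∏ j ∈ p.2, x j := by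
    rw [Finset.sum_sigma]
    apply Finset.sum_congr rfl
    intro i _
    rw [E, Finset.mul_sum]
  have rhs2 : ∑ T ∈ s.powersetCard (r+1), ∑ i ∈ T, x i * ∏ j ∈ T.erase i, x j
      = ∑ p ∈ (s.powersetCard (r+1)).sigma (fun T => T), x p.2 * ∏ j ∈ p.1.erase p.2, x j := by
    rw [Finset.sum_sigma]
  rw [lhs, rhs2]
  apply Finset.sum_nbij' (i := fun p => (⟨insert p.1 p.2, p.1⟩ : Σ _ : Finset ι, ι))
    (j := fun p => (⟨p.2, p.1.erase p.2⟩ : Σ _ : ι, Finset ι))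
  · rintro ⟨i, T⟩ hp
    rw [Finset.mem_sigma] at hp
    obtain ⟨his, hT⟩ := hp
    rw [Finset.mem_powersetCard] at hT
    have hiT : i ∉ T := fun h => (Finset.notMem_erase i s) (hT.1 h)
    rw [Finset.mem_sigma, Finset.mem_powersetCard]
    refine ⟨⟨Finset.insert_subset his ((hT.1).trans (Finset.erase_subset i s)), ?_⟩,
      Finset.mem_insert_self i T⟩
    rw [Finset.card_insert_of_notMem hiT, hT.2]
  · rintro ⟨T, i⟩ hp
    rw [Finset.mem_sigma, Finset.mem_powersetCard] at hp
    obtain ⟨⟨hTs, hTc⟩, hiT⟩ := hp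
    rw [Finset.mem_sigma, Finset.mem_powersetCard]
    refine ⟨hTs hiT, Finset.subset_erase.2 ⟨(Finset.erase_subset i T).trans hTs,
      Finset.notMem_erase i T⟩, ?_⟩
    simp [Finset.card_erase_of_mem hiT, hTc]
  · rintro ⟨i, T⟩ hp
    rw [Finset.mem_sigma] at hp
    obtain ⟨his, hT⟩ := hp
    rw [Finset.mem_powersetCard] at hT
    have hiT : i ∉ T := fun h => (Finset.notMem_erase i s) (hT.1 h)
    simp [Finset.erase_insert hiT]
  · rintro ⟨T, i⟩ hp
    rw [Finset.mem_sigma, Finset.mem_powersetCard] at hp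
    simp [Finset.insert_erase hp.2]
  · rintro ⟨i, T⟩ hp
    rw [Finset.mem_sigma] at hp
    obtain ⟨his, hT⟩ := hp
    rw [Finset.mem_powersetCard] at hT
    have hiT : i ∉ T := fun h => (Finset.notMem_erase i s) (hT.1 h)
    simp [Finset.erase_insert hiT]

lemma E_one (s : Finset ι) (x : ι → ℝ) : E 1 s x = ∑ i ∈ s, x i := by
  have := sum_mul_E_erase s 0 x
  simp only [E_zero, mul_one] at this
  rw [show ((0:ℕ)+1 : ℝ) = 1 by norm_num, one_mul] at this
  exact this.symm

lemma E_mono {s : Finset ι} {x y : ι → ℝ} (hx : ∀ i ∈ s, 0 ≤ x i) (hxy : ∀ i ∈ s, x i ≤ y i)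
    (r : ℕ) : E r s x ≤ E r s y := by
  apply Finset.sum_le_sum
  intro T hT
  rw [Finset.mem_powersetCard] at hT
  exact Finset.prod_le_prod (fun i hi => hx i (hT.1 hi)) (fun i hi => hxy i (hT.1 hi))

lemma E_smul (c : ℝ) (r : ℕ) (s : Finset ι) (x : ι → ℝ) :
    E r s (fun i => c * x i) = c ^ r * E r s x := by
  rw [E, E, Finset.mul_sum]
  apply Finset.sum_congr rfl
  intro T hT
  rw [Finset.mem_powersetCard] at hT
  rw [Finset.prod_mul_distrib, Finset.prod_const, hT.2]

lemma E_comp_perm {ι : Type*} [DecidableEq ι] [Fintype ι] (σ : Equiv.Perm ι) (r : ℕ)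
    (x : ι → ℝ) : E r Finset.univ (fun i => x (σ i)) = E r Finset.univ x := by
  rw [E, E]
  apply Finset.sum_nbij' (i := fun T => T.image σ) (j := fun T => T.image σ.symm)
  · intro T hT
    rw [Finset.mem_powersetCard] at hT ⊢
    exact ⟨Finset.subset_univ _, by rw [Finset.card_image_of_injective _ σ.injective, hT.2]⟩
  · intro T hT
    rw [Finset.mem_powersetCard] at hT ⊢
    exact ⟨Finset.subset_univ _, by rw [Finset.card_image_of_injective _ σ.symm.injective, hT.2]⟩
  · intro T _
    rw [Finset.image_image]
    simp
  · intro T _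
    rw [Finset.image_image]
    simp
  · intro T _
    rw [Finset.prod_image (fun a _ b _ h => σ.injective h)]


noncomputable def phi (u v : ℝ) : ℝ := u * v / (u + v)

lemma phi_mono {u v v' : ℝ} (hu : 0 < u) (hv : 0 ≤ v) (h : v ≤ v') : phi u v ≤ phi u v' := by
  unfold phi
  rw [div_le_div_iff₀ (by linarith) (by linarith)]
  nlinarith [mul_le_mul_of_nonneg_left h (sq_nonneg u)]

lemma phi_superadd {u1 u2 v1 v2 : ℝ} (h1 : 0 < u1) (h2 : 0 < u2) (h3 : 0 ≤ v1) (h4 : 0 ≤ v2) :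
    phi u1 v1 + phi u2 v2 ≤ phi (u1+u2) (v1+v2) := by
  unfold phi
  rw [div_add_div _ _ (by positivity) (by positivity), div_le_div_iff₀ (by positivity) (by positivity)]
  nlinarith [sq_nonneg (u1*v2 - u2*v1), mul_pos h1 h2, mul_nonneg h3 h4,
    mul_nonneg (mul_pos h1 h2).le (mul_nonneg h3 h4)]

variable {ι : Type*} [DecidableEq ι]

lemma ratio_formula {s : Finset ι} {x : ι → ℝ} (hx : ∀ i ∈ s, 0 < x i) {r : ℕ}
    (hr : r + 2 ≤ s.card) :
    E (r+2) s x / E (r+1) s x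
      = ((r:ℝ)+2)⁻¹ * ∑ i ∈ s, phi (x i) (E (r+1) (s.erase i) x / E r (s.erase i) x) := by
  have hE1 : 0 < E (r+1) s x := E_pos hx (by omega)
  have key : ∀ i ∈ s, phi (x i) (E (r+1) (s.erase i) x / E r (s.erase i) x)
      = x i * E (r+1) (s.erase i) x / E (r+1) s x := by
    intro i hi
    have hD : 0 < E r (s.erase i) x := by
      apply E_pos (fun j hj => hx j (Finset.mem_of_mem_erase hj))
      rw [Finset.card_erase_of_mem hi]
      omega
    have hN : 0 ≤ E (r+1) (s.erase i) x :=
      E_nonneg (fun j hj => (hx j (Finset.mem_of_mem_erase hj)).le) _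
    have hu : 0 < x i := hx i hi
    have hErw : E (r+1) s x = E (r+1) (s.erase i) x + x i * E r (s.erase i) x := E_erase hi r x
    rw [phi, hErw]
    rcases eq_or_lt_of_le hN with h|h
    · simp [← h]
    · have h2 : (0:ℝ) < x i + E (r+1) (s.erase i) x / E r (s.erase i) x := by positivity
      have h3 : (0:ℝ) < E (r+1) (s.erase i) x + x i * E r (s.erase i) x := by positivity
      rw [div_eq_div_iff h2.ne' h3.ne']
      field_simp
      ring
  rw [Finset.sum_congr rfl key, ← Finset.sum_div, sum_mul_E_erase s (r+1) x]
  have e : r+1+1 = r+2 := rfl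
  rw [e]
  have h4 : ((r:ℝ)+2) ≠ 0 := by positivity
  push_cast
  field_simp
  ring

theorem ML (r : ℕ) : ∀ (s : Finset ι) (a b : ι → ℝ), (∀ i ∈ s, 0 < a i) → (∀ i ∈ s, 0 < b i) →
    E (r+1) s a / E r s a + E (r+1) s b / E r s b ≤ E (r+1) s (a + b) / E r s (a + b) := by
  induction r with
  | zero =>
    intro s a b _ _
    simp only [Nat.zero_add, E_zero, div_one, E_one, ← Finset.sum_add_distrib]
    exact le_of_eq (Finset.sum_congr rfl (fun i _ => rfl))
  | succ r ih =>
    intro s a b ha hb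
    have e : r+1+1 = r+2 := rfl
    rw [e]
    by_cases hcard : r + 2 ≤ s.card
    · have hab : ∀ i ∈ s, 0 < (a + b) i := fun i hi => add_pos (ha i hi) (hb i hi)
      rw [ratio_formula ha hcard, ratio_formula hb hcard, ratio_formula hab hcard,
        ← mul_add]
      apply mul_le_mul_of_nonneg_left _ (by positivity)
      rw [← Finset.sum_add_distrib]
      apply Finset.sum_le_sum
      intro i hi
      have hpa : 0 ≤ E (r+1) (s.erase i) a / E r (s.erase i) a :=
        div_nonneg (E_nonneg (fun j hj => (ha j (Finset.mem_of_mem_erase hj)).le) _)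
          (E_nonneg (fun j hj => (ha j (Finset.mem_of_mem_erase hj)).le) _)
      have hpb : 0 ≤ E (r+1) (s.erase i) b / E r (s.erase i) b :=
        div_nonneg (E_nonneg (fun j hj => (hb j (Finset.mem_of_mem_erase hj)).le) _)
          (E_nonneg (fun j hj => (hb j (Finset.mem_of_mem_erase hj)).le) _)
      have hih := ih (s.erase i) a b (fun j hj => ha j (Finset.mem_of_mem_erase hj))
        (fun j hj => hb j (Finset.mem_of_mem_erase hj))
      calc phi (a i) (E (r+1) (s.erase i) a / E r (s.erase i) a)
            + phi (b i) (E (r+1) (s.erase i) b / E r (s.erase i) b)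
          ≤ phi (a i + b i) (E (r+1) (s.erase i) a / E r (s.erase i) a
              + E (r+1) (s.erase i) b / E r (s.erase i) b) :=
            phi_superadd (ha i hi) (hb i hi) hpa hpb
        _ ≤ phi ((a+b) i) (E (r+1) (s.erase i) (a+b) / E r (s.erase i) (a+b)) := by
            exact phi_mono (by exact add_pos (ha i hi) (hb i hi)) (by linarith [hpa, hpb]) hih
    · have hz : ∀ y : ι → ℝ, E (r+2) s y = 0 := by
        intro y
        rw [E, Finset.powersetCard_eq_empty.2 (by omega), Finset.sum_empty]
      rw [hz, hz, hz]
      simp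

section Glemmas

open Topology Filter

variable {ι : Type*} [DecidableEq ι] [Fintype ι]

noncomputable def G (k : ℕ) (x : ι → ℝ) : ℝ :=
  E (k+1) Finset.univ x / E k Finset.univ x

lemma continuous_E (r : ℕ) (s : Finset ι) : Continuous (fun x : ι → ℝ => E r s x) := by
  unfold E
  exact continuous_finset_sum _ fun T _ => continuous_finset_prod _ fun i _ => continuous_apply i

lemma G_nonneg {k : ℕ} {x : ι → ℝ} (hx : ∀ i, 0 ≤ x i) : 0 ≤ G k x :=
  div_nonneg (E_nonneg (fun i _ => hx i) _) (E_nonneg (fun i _ => hx i) _)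

lemma tendstoG {k : ℕ} {x : ι → ℝ} (hx : E k Finset.univ x ≠ 0) {φ : ℝ → ℝ}
    (hφ : Continuous φ) (hφ0 : φ 0 = 0) :
    Filter.Tendsto (fun ε : ℝ => G k (x + φ ε • (1 : ι → ℝ)))
      (nhdsWithin 0 (Set.Ioi 0)) (nhds (G k x)) := by
  have hcont : Continuous (fun ε : ℝ => x + φ ε • (1 : ι → ℝ)) :=
    continuous_const.add (hφ.smul continuous_const)
  have h0 : x + φ 0 • (1 : ι → ℝ) = x := by rw [hφ0]; simp
  have h1 : Filter.Tendsto (fun ε : ℝ => E (k+1) Finset.univ (x + φ ε • (1:ι→ℝ))) (nhds 0)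
      (nhds (E (k+1) Finset.univ x)) := by
    have := ((continuous_E (k+1) (Finset.univ : Finset ι)).comp hcont).tendsto 0
    simpa [Function.comp_def, h0] using this
  have h2 : Filter.Tendsto (fun ε : ℝ => E k Finset.univ (x + φ ε • (1:ι→ℝ))) (nhds 0)
      (nhds (E k Finset.univ x)) := by
    have := ((continuous_E k (Finset.univ : Finset ι)).comp hcont).tendsto 0
    simpa [Function.comp_def, h0] using this
  exact ((h1.div h2 hx).mono_left nhdsWithin_le_nhds)

theorem G_superadd (k : ℕ) {a b : ι → ℝ} (ha : ∀ i, 0 ≤ a i) (hb : ∀ i, 0 ≤ b i) :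
    G k a + G k b ≤ G k (a + b) := by
  have hab : ∀ i, 0 ≤ (a + b) i := fun i => add_nonneg (ha i) (hb i)
  by_cases hc : E k Finset.univ (a+b) = 0
  · have hca : E k Finset.univ a = 0 :=
      le_antisymm (le_of_le_of_eq (E_mono (fun i _ => ha i)
        (fun i _ => le_add_of_nonneg_right (hb i)) k) hc) (E_nonneg (fun i _ => ha i) k)
    have hcb : E k Finset.univ b = 0 :=
      le_antisymm (le_of_le_of_eq (E_mono (fun i _ => hb i)
        (fun i _ => le_add_of_nonneg_left (ha i)) k) hc) (E_nonneg (fun i _ => hb i) k)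
    rw [G, G, G, hc, hca, hcb]
    simp
  · have hIneq : ∀ ε : ℝ, ε ∈ Set.Ioi (0:ℝ) →
        G k (a + ε • (1:ι→ℝ)) + G k (b + ε • (1:ι→ℝ)) ≤ G k ((a+b) + (2*ε) • (1:ι→ℝ)) := by
      intro ε hε
      rw [Set.mem_Ioi] at hε
      have hpa : ∀ i ∈ (Finset.univ : Finset ι), 0 < (a + ε • (1:ι→ℝ)) i := fun i _ => by
        have := ha i
        simp only [Pi.add_apply, Pi.smul_apply, Pi.one_apply, smul_eq_mul, mul_one]
        linarith
      have hpb : ∀ i ∈ (Finset.univ : Finset ι), 0 < (b + ε • (1:ι→ℝ)) i := fun i _ => by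
        have := hb i
        simp only [Pi.add_apply, Pi.smul_apply, Pi.one_apply, smul_eq_mul, mul_one]
        linarith
      have hml := ML k Finset.univ (a + ε • (1:ι→ℝ)) (b + ε • (1:ι→ℝ)) hpa hpb
      have heq : (a + ε • (1:ι→ℝ)) + (b + ε • (1:ι→ℝ)) = (a+b) + (2*ε) • (1:ι→ℝ) := by
        funext i
        simp only [Pi.add_apply, Pi.smul_apply, Pi.one_apply, smul_eq_mul, mul_one]
        ring
      rw [heq] at hml
      exact hml
    have htc : Filter.Tendsto (fun ε : ℝ => G k ((a+b) + (2*ε) • (1:ι→ℝ)))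
        (nhdsWithin 0 (Set.Ioi 0)) (nhds (G k (a+b))) :=
      tendstoG hc (by continuity) (by norm_num)
    by_cases hca : E k Finset.univ a = 0
    · have hga : G k a = 0 := by rw [G, hca, div_zero]
      by_cases hcb : E k Finset.univ b = 0
      · have hgb : G k b = 0 := by rw [G, hcb, div_zero]
        rw [hga, hgb, add_zero]
        exact G_nonneg hab
      · have htb : Filter.Tendsto (fun ε : ℝ => G k (b + ε • (1:ι→ℝ)))
            (nhdsWithin 0 (Set.Ioi 0)) (nhds (G k b)) := by
          have := tendstoG hcb (continuous_id) (rfl)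
          simpa using this
        have hEv2 : ∀ᶠ ε in nhdsWithin (0:ℝ) (Set.Ioi 0),
            G k (b + ε • (1:ι→ℝ)) ≤ G k ((a+b) + (2*ε) • (1:ι→ℝ)) := by
          apply Filter.eventually_of_mem self_mem_nhdsWithin
          intro ε hε
          have hε' : (0:ℝ) < ε := hε
          have hnn : 0 ≤ G k (a + ε • (1:ι→ℝ)) := G_nonneg (fun i => by
            have := ha i
            simp only [Pi.add_apply, Pi.smul_apply, Pi.one_apply, smul_eq_mul, mul_one]
            linarith)
          linarith [hIneq ε hε]
        rw [hga, zero_add]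
        exact le_of_tendsto_of_tendsto htb htc hEv2
    · have hta : Filter.Tendsto (fun ε : ℝ => G k (a + ε • (1:ι→ℝ)))
          (nhdsWithin 0 (Set.Ioi 0)) (nhds (G k a)) := by
        have := tendstoG hca (continuous_id) (rfl)
        simpa using this
      by_cases hcb : E k Finset.univ b = 0
      · have hgb : G k b = 0 := by rw [G, hcb, div_zero]
        have hEv2 : ∀ᶠ ε in nhdsWithin (0:ℝ) (Set.Ioi 0),
            G k (a + ε • (1:ι→ℝ)) ≤ G k ((a+b) + (2*ε) • (1:ι→ℝ)) := by
          apply Filter.eventually_of_mem self_mem_nhdsWithin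
          intro ε hε
          have hε' : (0:ℝ) < ε := hε
          have hnn : 0 ≤ G k (b + ε • (1:ι→ℝ)) := G_nonneg (fun i => by
            have := hb i
            simp only [Pi.add_apply, Pi.smul_apply, Pi.one_apply, smul_eq_mul, mul_one]
            linarith)
          linarith [hIneq ε hε]
        rw [hgb, add_zero]
        exact le_of_tendsto_of_tendsto hta htc hEv2
      · have htb : Filter.Tendsto (fun ε : ℝ => G k (b + ε • (1:ι→ℝ)))
            (nhdsWithin 0 (Set.Ioi 0)) (nhds (G k b)) := by
          have := tendstoG hcb (continuous_id) (rfl)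
          simpa using this
        have hEv : ∀ᶠ ε in nhdsWithin (0:ℝ) (Set.Ioi 0),
            G k (a + ε • (1:ι→ℝ)) + G k (b + ε • (1:ι→ℝ))
              ≤ G k ((a+b) + (2*ε) • (1:ι→ℝ)) :=
          Filter.eventually_of_mem self_mem_nhdsWithin hIneq
        exact le_of_tendsto_of_tendsto (hta.add htb) htc hEv

lemma G_zero (k : ℕ) : G k (0 : ι → ℝ) = 0 := by
  have hE : E (k+1) (Finset.univ : Finset ι) (0 : ι → ℝ) = 0 := by
    apply Finset.sum_eq_zero
    intro T hT
    rw [Finset.mem_powersetCard] at hT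
    have : T.Nonempty := Finset.card_pos.1 (by omega)
    obtain ⟨i, hi⟩ := this
    exact Finset.prod_eq_zero hi rfl
  rw [G, hE, zero_div]

lemma G_smul {k : ℕ} {c : ℝ} (hc : 0 ≤ c) (x : ι → ℝ) : G k (c • x) = c * G k x := by
  rcases eq_or_lt_of_le hc with h|h
  · rw [← h, zero_smul, G_zero, zero_mul]
  · have hcx : (c • x) = (fun i => c * x i) := rfl
    rw [G, G, hcx, E_smul, E_smul, pow_succ, mul_assoc,
      mul_div_mul_left _ _ (pow_ne_zero k h.ne'), mul_div_assoc]

lemma G_convex_comb {k : ℕ} {α : Type*} (t : Finset α) (w : α → ℝ) (y : α → ι → ℝ)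
    (hw : ∀ j ∈ t, 0 ≤ w j) (hy : ∀ j ∈ t, ∀ i, 0 ≤ y j i) :
    ∑ j ∈ t, w j * G k (y j) ≤ G k (∑ j ∈ t, w j • y j) := by
  classical
  induction t using Finset.cons_induction with
  | empty => simp [G_zero]
  | cons j t hj ih =>
    rw [Finset.sum_cons, Finset.sum_cons]
    have h1 : w j * G k (y j) = G k (w j • y j) :=
      (G_smul (hw j (Finset.mem_cons_self j t)) (y j)).symm
    have h2 : ∑ j' ∈ t, w j' * G k (y j') ≤ G k (∑ j' ∈ t, w j' • y j') :=
      ih (fun j' hj' => hw j' (Finset.mem_cons_of_mem hj'))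
        (fun j' hj' => hy j' (Finset.mem_cons_of_mem hj'))
    calc w j * G k (y j) + ∑ j' ∈ t, w j' * G k (y j')
        ≤ G k (w j • y j) + G k (∑ j' ∈ t, w j' • y j') := by
          rw [← h1]; exact add_le_add_right h2 _
      _ ≤ G k (w j • y j + ∑ j' ∈ t, w j' • y j') := by
          apply G_superadd
          · intro i
            exact mul_nonneg (hw j (Finset.mem_cons_self j t)) (hy j (Finset.mem_cons_self j t) i)
          · intro i
            rw [Finset.sum_apply]
            exact Finset.sum_nonneg fun j' hj' => mul_nonneg
              (hw j' (Finset.mem_cons_of_mem hj')) (hy j' (Finset.mem_cons_of_mem hj') i)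

lemma G_comp_perm {k : ℕ} (σ : Equiv.Perm ι) (x : ι → ℝ) : G k (x ∘ σ) = G k x := by
  have h1 : (x ∘ σ) = (fun i => x (σ i)) := rfl
  rw [G, G, h1, E_comp_perm, E_comp_perm]



end Glemmas

section MatrixPart

variable {n : ℕ}

lemma diag_conj_rep {P : Matrix (Fin n) (Fin n) ℝ} (hP : P.PosSemidef)
    {U : Matrix (Fin n) (Fin n) ℝ} (hU : U ∈ Matrix.unitaryGroup (Fin n) ℝ) :
    ∃ w : Equiv.Perm (Fin n) → ℝ, (∀ σ, 0 ≤ w σ) ∧ ∑ σ, w σ = 1 ∧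
      ∀ i, (star U * P * U) i i = ∑ σ : Equiv.Perm (Fin n), w σ * hP.1.eigenvalues (σ i) := by
  classical
  set W : Matrix (Fin n) (Fin n) ℝ :=
    (Matrix.IsHermitian.eigenvectorUnitary hP.1 : Matrix (Fin n) (Fin n) ℝ) with hWdef
  have hW : W ∈ Matrix.unitaryGroup (Fin n) ℝ := (Matrix.IsHermitian.eigenvectorUnitary hP.1).2
  set lam := hP.1.eigenvalues with hlam
  have hspec : P = W * Matrix.diagonal (RCLike.ofReal ∘ lam) * star W := hP.1.spectral_theorem
  set M : Matrix (Fin n) (Fin n) ℝ := star U * W with hMdef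
  have hU1 : U * star U = 1 := Matrix.mem_unitaryGroup_iff.1 hU
  have hU2 : star U * U = 1 := Matrix.mem_unitaryGroup_iff'.1 hU
  have hW1 : W * star W = 1 := Matrix.mem_unitaryGroup_iff.1 hW
  have hW2 : star W * W = 1 := Matrix.mem_unitaryGroup_iff'.1 hW
  have hstarM : star M = star W * U := by rw [hMdef, StarMul.star_mul, star_star]
  have hM1 : M * star M = 1 := by
    rw [hMdef, hstarM]
    calc star U * W * (star W * U) = star U * (W * star W * U) := by
          simp only [Matrix.mul_assoc]
      _ = 1 := by rw [hW1, Matrix.one_mul, hU2]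
  have hM2 : star M * M = 1 := by
    rw [hMdef, hstarM]
    calc star W * U * (star U * W) = star W * (U * star U * W) := by
          simp only [Matrix.mul_assoc]
      _ = 1 := by rw [hU1, Matrix.one_mul, hW2]
  have hdiag : star U * P * U = M * Matrix.diagonal (RCLike.ofReal ∘ lam) * star M := by
    rw [hspec, hMdef, hstarM]
    simp only [Matrix.mul_assoc]
  have hentry : ∀ i, (star U * P * U) i i = ∑ l, (M i l)^2 * lam l := by
    intro i
    rw [hdiag, Matrix.mul_apply]
    apply Finset.sum_congr rfl
    intro l _
    simp only [Matrix.mul_diagonal, Matrix.star_apply, star_trivial, Function.comp_apply,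
      RCLike.ofReal_real_eq_id, id_eq]
    ring
  set S : Matrix (Fin n) (Fin n) ℝ := Matrix.of (fun i j => (M i j)^2) with hSdef
  have hS : S ∈ doublyStochastic ℝ (Fin n) := by
    rw [mem_doublyStochastic_iff_sum]
    refine ⟨fun i j => sq_nonneg _, fun i => ?_, fun j => ?_⟩
    · have h := congrArg (fun X : Matrix (Fin n) (Fin n) ℝ => X i i) hM1
      simp only [Matrix.mul_apply, Matrix.star_apply, star_trivial, Matrix.one_apply_eq] at h
      calc ∑ j, S i j = ∑ j, M i j * M i j := by
            apply Finset.sum_congr rfl; intro j _; simp [hSdef]; ring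
        _ = 1 := h
    · have h := congrArg (fun X : Matrix (Fin n) (Fin n) ℝ => X j j) hM2
      simp only [Matrix.mul_apply, Matrix.star_apply, star_trivial, Matrix.one_apply_eq] at h
      calc ∑ i, S i j = ∑ i, M i j * M i j := by
            apply Finset.sum_congr rfl; intro i _; simp [hSdef]; ring
        _ = 1 := h
  obtain ⟨w, hw0, hw1, hwS⟩ := exists_eq_sum_perm_of_mem_doublyStochastic hS
  refine ⟨w, hw0, hw1, fun i => ?_⟩
  rw [hentry i]
  have hSi : ∀ l, (M i l)^2 = ∑ σ : Equiv.Perm (Fin n), w σ * (σ.permMatrix ℝ) i l := by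
    intro l
    have h := congrArg (fun X : Matrix (Fin n) (Fin n) ℝ => X i l) hwS
    simp only [Matrix.sum_apply, Matrix.smul_apply, smul_eq_mul] at h
    calc (M i l)^2 = S i l := by simp [hSdef]
      _ = ∑ σ : Equiv.Perm (Fin n), w σ * (σ.permMatrix ℝ) i l := h.symm
  calc ∑ l, (M i l)^2 * lam l
      = ∑ l, (∑ σ : Equiv.Perm (Fin n), w σ * (σ.permMatrix ℝ) i l) * lam l := by
        exact Finset.sum_congr rfl (fun l _ => by rw [hSi l])
    _ = ∑ σ : Equiv.Perm (Fin n), ∑ l, w σ * (σ.permMatrix ℝ) i l * lam l := by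
        rw [Finset.sum_comm]
        exact Finset.sum_congr rfl (fun l _ => by rw [Finset.sum_mul])
    _ = ∑ σ : Equiv.Perm (Fin n), w σ * lam (σ i) := by
        apply Finset.sum_congr rfl
        intro σ _
        have : ∀ l, (σ.permMatrix ℝ) i l = if σ i = l then 1 else 0 := by
          intro l
          simp [Equiv.Perm.permMatrix, PEquiv.toMatrix_apply, Equiv.toPEquiv_apply]
        simp only [this, mul_ite, mul_one, mul_zero, ite_mul, zero_mul]
        rw [Finset.sum_ite_eq]
        simp

end MatrixPart

end DppAux

lemma esym_eq_E {n : ℕ} (m : ℕ) (x : Fin n → ℝ) : esym m x = DppAux.E m Finset.univ x := rfl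

/-- Subadditivity of the DPP expectation: for `n × n` symmetric PSD matrices `A` and `B`
and `0 ≤ k ≤ n`, `D_k(A) + D_k(B) ≥ D_k(A+B)`. -/
theorem stmt_16 (n : ℕ) (A B : Matrix (Fin n) (Fin n) ℝ)
    (hA : A.PosSemidef) (hB : B.PosSemidef) (k : ℕ) (hk : k ≤ n) :
    dppExp k (A + B) (hA.1.add hB.1) ≤ dppExp k A hA.1 + dppExp k B hB.1 := by
  classical
  have key : ∀ (hC : (A+B).IsHermitian),
      esym (k+1) hA.1.eigenvalues / esym k hA.1.eigenvalues
        + esym (k+1) hB.1.eigenvalues / esym k hB.1.eigenvalues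
        ≤ esym (k+1) hC.eigenvalues / esym k hC.eigenvalues := by
    intro hC
    show DppAux.G k hA.1.eigenvalues + DppAux.G k hB.1.eigenvalues ≤ DppAux.G k hC.eigenvalues
    set Ue : Matrix (Fin n) (Fin n) ℝ := (hC.eigenvectorUnitary : Matrix (Fin n) (Fin n) ℝ)
      with hUe
    have hUmem : Ue ∈ Matrix.unitaryGroup (Fin n) ℝ := hC.eigenvectorUnitary.2
    have hdiagC : star Ue * (A+B) * Ue = Matrix.diagonal (RCLike.ofReal ∘ hC.eigenvalues) :=
      by
        have h := hC.conjStarAlgAut_star_eigenvectorUnitary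
        simp only [Unitary.conjStarAlgAut_apply, Unitary.coe_star, star_star] at h
        exact h
    obtain ⟨wA, hwA0, hwA1, hrepA⟩ := DppAux.diag_conj_rep hA hUmem
    obtain ⟨wB, hwB0, hwB1, hrepB⟩ := DppAux.diag_conj_rep hB hUmem
    set dA : Fin n → ℝ := fun i => (star Ue * A * Ue) i i with hdA
    set dB : Fin n → ℝ := fun i => (star Ue * B * Ue) i i with hdB
    have hsum : dA + dB = hC.eigenvalues := by
      funext i
      have h1 : star Ue * (A+B) * Ue = star Ue * A * Ue + star Ue * B * Ue := by
        rw [Matrix.mul_add, Matrix.add_mul]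
      have h2 := congrArg (fun X : Matrix (Fin n) (Fin n) ℝ => X i i) (h1.symm.trans hdiagC)
      simp only [Matrix.add_apply, Matrix.diagonal_apply_eq, Function.comp_apply,
        RCLike.ofReal_real_eq_id, id_eq] at h2
      simpa [hdA, hdB] using h2
    have hdAnn : ∀ i, 0 ≤ dA i := fun i => by
      show 0 ≤ (star Ue * A * Ue) i i
      rw [hrepA i]
      exact Finset.sum_nonneg fun σ _ => mul_nonneg (hwA0 σ) (hA.eigenvalues_nonneg _)
    have hdBnn : ∀ i, 0 ≤ dB i := fun i => by
      show 0 ≤ (star Ue * B * Ue) i i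
      rw [hrepB i]
      exact Finset.sum_nonneg fun σ _ => mul_nonneg (hwB0 σ) (hB.eigenvalues_nonneg _)
    have hrepA' : dA = ∑ σ : Equiv.Perm (Fin n), wA σ • (hA.1.eigenvalues ∘ σ) := by
      funext i
      rw [Finset.sum_apply]
      simp only [Pi.smul_apply, Function.comp_apply, smul_eq_mul]
      exact hrepA i
    have hrepB' : dB = ∑ σ : Equiv.Perm (Fin n), wB σ • (hB.1.eigenvalues ∘ σ) := by
      funext i
      rw [Finset.sum_apply]
      simp only [Pi.smul_apply, Function.comp_apply, smul_eq_mul]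
      exact hrepB i
    have hGA : DppAux.G k hA.1.eigenvalues ≤ DppAux.G k dA := by
      rw [hrepA']
      have hcc := DppAux.G_convex_comb (k := k) Finset.univ wA (fun σ => hA.1.eigenvalues ∘ σ)
        (fun σ _ => hwA0 σ) (fun σ _ i => hA.eigenvalues_nonneg _)
      simp only [DppAux.G_comp_perm] at hcc
      rwa [← Finset.sum_mul, hwA1, one_mul] at hcc
    have hGB : DppAux.G k hB.1.eigenvalues ≤ DppAux.G k dB := by
      rw [hrepB']
      have hcc := DppAux.G_convex_comb (k := k) Finset.univ wB (fun σ => hB.1.eigenvalues ∘ σ)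
        (fun σ _ => hwB0 σ) (fun σ _ i => hB.eigenvalues_nonneg _)
      simp only [DppAux.G_comp_perm] at hcc
      rwa [← Finset.sum_mul, hwB1, one_mul] at hcc
    calc DppAux.G k hA.1.eigenvalues + DppAux.G k hB.1.eigenvalues
        ≤ DppAux.G k dA + DppAux.G k dB := add_le_add hGA hGB
      _ ≤ DppAux.G k (dA + dB) := DppAux.G_superadd k hdAnn hdBnn
      _ = DppAux.G k hC.eigenvalues := by rw [hsum]
  have h := key (hA.1.add hB.1)
  simp only [dppExp, Matrix.trace_add]
  have hk1 : (0:ℝ) ≤ (k:ℝ)+1 := by positivity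
  have h2 := mul_le_mul_of_nonneg_left h hk1
  rw [mul_add] at h2
  rw [mul_div_assoc, mul_div_assoc, mul_div_assoc]
  linarith
end

section
/- For a rescaled Laplacian L with Lh = 0, ‖h‖₂ = 1, and K = L⁺, if index j satisfies K_{jj}/h_j² ≤ (1+ζ)·min_i {K_{ii}/h_i²} for some ζ ≥ 0, then Tr[(L_{{j}^c,{j}^c})⁻¹] ≤ (2+ζ)·Tr[L⁺]; equivalently the single-column objective satisfies L_L^h({j}) = −K_{jj}/h_j² ≥ −(1+ζ)·Tr[L⁺]. -/
open Matrix BigOperators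

/-- The inclusion of the complement of a single index. -/
def inclNe {n : ℕ} (j : Fin n) : {x // x ≠ j} → Fin n := fun i => i

/-- Sum over the subtype of indices different from `j`. -/
lemma sum_ne_aux {n : ℕ} (j : Fin n) (f : Fin n → ℝ) :
    ∑ c : {x // x ≠ j}, f c = ∑ c, f c - f j := by
  rw [← Finset.sum_subtype (Finset.univ.filter (· ≠ j)) (by simp) f]
  rw [Finset.filter_ne' Finset.univ j, Finset.sum_erase_eq_sub (Finset.mem_univ j)]

/-- If `Q` is symmetric, `L*Q = L`, `Q h = 0` and the kernel of `L` is spanned by the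
unit vector `h`, then `Q = I - h hᵀ` entrywise. -/
lemma proj_aux {n : ℕ} (L Q : Matrix (Fin n) (Fin n) ℝ) (h : Fin n → ℝ)
    (hnorm : ∑ i, h i ^ 2 = 1)
    (hker : ∀ x : Fin n → ℝ, L *ᵥ x = 0 → ∃ c : ℝ, x = c • h)
    (hLQ : L * Q = L) (hQsym : Qᵀ = Q) (hQh : Q *ᵥ h = 0) :
    ∀ a b, Q a b = (if a = b then 1 else 0) - h a * h b := by
  intro a b
  obtain ⟨c, hc⟩ := hker ((1 - Q) *ᵥ Pi.single b 1) (by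
    rw [Matrix.mulVec_mulVec, Matrix.mul_sub, Matrix.mul_one, hLQ, sub_self,
      Matrix.zero_mulVec])
  have hcol : ∀ a, (1 - Q) a b = c * h a := by
    intro a
    have := congrFun hc a
    rw [Matrix.mulVec_single] at this
    simpa using this
  have h1 : ∑ a, h a * ((1 - Q) a b) = c := by
    calc ∑ a, h a * ((1 - Q) a b) = ∑ a, c * h a ^ 2 :=
          Finset.sum_congr rfl fun a _ => by rw [hcol]; ring
    _ = c * ∑ a, h a ^ 2 := by rw [Finset.mul_sum]
    _ = c := by rw [hnorm, mul_one]
  have hz : ∑ a, h a * Q a b = 0 := by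
    calc ∑ a, h a * Q a b = ∑ a, Q b a * h a :=
          Finset.sum_congr rfl fun a _ => by
            have : Q a b = Q b a := by conv_lhs => rw [← hQsym, Matrix.transpose_apply]
            rw [this]; ring
    _ = (Q *ᵥ h) b := rfl
    _ = 0 := by rw [hQh]; rfl
  have h2 : ∑ a, h a * ((1 - Q) a b) = h b := by
    have : ∀ a, h a * ((1 - Q) a b) = h a * (if a = b then 1 else 0) - h a * Q a b := by
      intro a
      rw [Matrix.sub_apply, Matrix.one_apply]
      ring
    rw [Finset.sum_congr rfl fun a _ => this a, Finset.sum_sub_distrib, hz, sub_zero]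
    simp
  have hcb : c = h b := by rw [← h1, h2]
  have := hcol a
  rw [Matrix.sub_apply, Matrix.one_apply, hcb] at this
  linarith

/-- Bounding of the objective after one iteration, for a rescaled Laplacian `L`
(symmetric PSD with kernel spanned by the entrywise positive unit vector `h`) and
`K = L⁺` (characterized by the Penrose conditions): if the index `j` satisfies
`K_{jj}/h_j² ≤ (1+ζ) min_i K_{ii}/h_i²` (stated as `K_{jj}/h_j² ≤ (1+ζ)(K_{ii}/h_i²)`
for every `i`) with `ζ ≥ 0`, then `Tr[(L_{{j}ᶜ,{j}ᶜ})⁻¹] ≤ (2+ζ) Tr[L⁺]`;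
equivalently `−K_{jj}/h_j² ≥ −(1+ζ) Tr[L⁺]`. -/
theorem stmt_18 (n : ℕ) (L K : Matrix (Fin n) (Fin n) ℝ) (h : Fin n → ℝ)
    (hL : L.PosSemidef) (hLh : L *ᵥ h = 0) (hnorm : ∑ i, h i ^ 2 = 1)
    (hpos : ∀ i, 0 < h i)
    (hker : ∀ x : Fin n → ℝ, L *ᵥ x = 0 → ∃ c : ℝ, x = c • h)
    (pen1 : L * K * L = L) (pen2 : K * L * K = K)
    (pen3 : (L * K)ᵀ = L * K) (pen4 : (K * L)ᵀ = K * L)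
    (ζ : ℝ) (hζ : 0 ≤ ζ) (j : Fin n)
    (hj : ∀ i, K j j / h j ^ 2 ≤ (1 + ζ) * (K i i / h i ^ 2)) :
    ((L.submatrix (inclNe j) (inclNe j))⁻¹).trace ≤ (2 + ζ) * K.trace ∧
      -((1 + ζ) * K.trace) ≤ -(K j j / h j ^ 2) := by
  have hj0 : h j ≠ 0 := (hpos j).ne'
  have Lsym : Lᵀ = L := by
    simpa [Matrix.IsHermitian, Matrix.conjTranspose_eq_transpose_of_trivial] using hL.1
  -- K*L  =  I - h hᵀ
  have hKL : ∀ a b, (K * L) a b = (if a = b then 1 else 0) - h a * h b := by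
    refine proj_aux L (K * L) h hnorm hker ?_ pen4 ?_
    · rw [← Matrix.mul_assoc, pen1]
    · rw [← Matrix.mulVec_mulVec, hLh, Matrix.mulVec_zero]
  -- Kᵀ*L = L*K
  have hKtL : Kᵀ * L = L * K := by
    conv_rhs => rw [← pen3, Matrix.transpose_mul, Lsym]
  -- L*K = I - h hᵀ
  have hLK : ∀ a b, (L * K) a b = (if a = b then 1 else 0) - h a * h b := by
    rw [← hKtL]
    refine proj_aux L (Kᵀ * L) h hnorm hker ?_ ?_ ?_
    · -- L * (Kᵀ * L) = L
      have := congrArg Matrix.transpose pen1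
      rw [Matrix.transpose_mul, Matrix.transpose_mul, Lsym] at this
      exact this
    · rw [Matrix.transpose_mul, Lsym, Matrix.transpose_transpose, hKtL]
    · rw [← Matrix.mulVec_mulVec, hLh, Matrix.mulVec_zero]
  -- (L*K) h = 0
  have hLKh : (L * K) *ᵥ h = 0 := by
    funext a
    have : ((L * K) *ᵥ h) a = ∑ b, (L * K) a b * h b := rfl
    rw [this]
    calc ∑ b, (L * K) a b * h b
        = ∑ b, ((if a = b then 1 else 0) * h b - h a * h b ^ 2) :=
          Finset.sum_congr rfl fun b _ => by rw [hLK]; ring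
      _ = (∑ b, (if a = b then 1 else 0) * h b) - h a * ∑ b, h b ^ 2 := by
          rw [Finset.sum_sub_distrib, Finset.mul_sum]
      _ = h a - h a := by rw [hnorm, mul_one]; simp
      _ = 0 := by ring
  -- K h = 0
  have hKh : K *ᵥ h = 0 := by
    have pen2' : K * (L * K) = K := by rw [← Matrix.mul_assoc]; exact pen2
    calc K *ᵥ h = (K * (L * K)) *ᵥ h := by rw [pen2']
    _ = K *ᵥ ((L * K) *ᵥ h) := by rw [Matrix.mulVec_mulVec]
    _ = 0 := by rw [hLKh, Matrix.mulVec_zero]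
  -- Kᵀ h = 0
  have hKth : Kᵀ *ᵥ h = 0 := by
    have e1 : Kᵀ * (K * L) = Kᵀ := by
      rw [← pen4, ← Matrix.transpose_mul]
      show ((K * L) * K)ᵀ = Kᵀ
      rw [show K * L * K = K from pen2]
    have e2 : (K * L) *ᵥ h = 0 := by
      rw [← Matrix.mulVec_mulVec, hLh, Matrix.mulVec_zero]
    calc Kᵀ *ᵥ h = (Kᵀ * (K * L)) *ᵥ h := by rw [e1]
    _ = Kᵀ *ᵥ ((K * L) *ᵥ h) := by rw [Matrix.mulVec_mulVec]
    _ = 0 := by rw [e2, Matrix.mulVec_zero]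
  have hKh' : ∀ b, ∑ c, K b c * h c = 0 := fun b => congrFun hKh b
  have hKth' : ∀ b, ∑ c, K c b * h c = 0 := fun b => by
    have := congrFun hKth b
    simpa [Matrix.mulVec, dotProduct] using this
  -- the explicit inverse of the submatrix
  set M : Matrix (Fin n) (Fin n) ℝ := Matrix.of fun a b =>
    K a b - h b / h j * K a j - h a / h j * K j b + K j j / h j ^ 2 * (h a * h b) with hM
  have hMapp : ∀ a b, M a b =
      K a b - h b / h j * K a j - h a / h j * K j b + K j j / h j ^ 2 * (h a * h b) :=
    fun a b => rfl
  have hMj : ∀ b, M j b = 0 := by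
    intro b
    rw [hMapp]
    field_simp
    ring
  have hLh' : ∀ a, ∑ c, L a c * h c = 0 := fun a => congrFun hLh a
  have hLKsum : ∀ a b, ∑ c, L a c * K c b = (if a = b then 1 else 0) - h a * h b := by
    intro a b
    rw [← Matrix.mul_apply, hLK]
  have hLM : ∀ a b, a ≠ j → ∑ c, L a c * M c b = if a = b then 1 else 0 := by
    intro a b ha
    calc ∑ c, L a c * M c b
        = ∑ c, (L a c * K c b - h b / h j * (L a c * K c j)
            - K j b / h j * (L a c * h c) + K j j / h j ^ 2 * h b * (L a c * h c)) :=
          Finset.sum_congr rfl fun c _ => by rw [hMapp]; ring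
      _ = (∑ c, L a c * K c b) - h b / h j * (∑ c, L a c * K c j)
            - K j b / h j * (∑ c, L a c * h c)
            + K j j / h j ^ 2 * h b * (∑ c, L a c * h c) := by
          rw [Finset.sum_add_distrib, Finset.sum_sub_distrib, Finset.sum_sub_distrib,
            Finset.mul_sum, Finset.mul_sum, Finset.mul_sum]
      _ = if a = b then 1 else 0 := by
          rw [hLKsum a b, hLKsum a j, hLh' a, if_neg ha]
          generalize (if a = b then (1:ℝ) else 0) = d
          field_simp
          ring
  have hprod : L.submatrix (inclNe j) (inclNe j) * M.submatrix (inclNe j) (inclNe j)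
      = 1 := by
    ext a b
    rw [Matrix.mul_apply]
    have : ∀ c : {x // x ≠ j},
        L.submatrix (inclNe j) (inclNe j) a c * M.submatrix (inclNe j) (inclNe j) c b
          = L a.1 c.1 * M c.1 b.1 := fun c => rfl
    rw [Finset.sum_congr rfl fun c _ => this c,
      sum_ne_aux j (fun c => L a.1 c * M c b.1), hMj b.1, mul_zero, sub_zero,
      hLM a.1 b.1 a.2]
    by_cases hab : a = b
    · simp [hab, Matrix.one_apply]
    · have : a.1 ≠ b.1 := fun e => hab (Subtype.ext e)
      simp [Matrix.one_apply, hab, this]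
  have hinv : (L.submatrix (inclNe j) (inclNe j))⁻¹
      = M.submatrix (inclNe j) (inclNe j) := Matrix.inv_eq_right_inv hprod
  -- trace computation
  have htr : (M.submatrix (inclNe j) (inclNe j)).trace = K.trace + K j j / h j ^ 2 := by
    have : (M.submatrix (inclNe j) (inclNe j)).trace = ∑ c : {x // x ≠ j}, M c.1 c.1 :=
      rfl
    rw [this, sum_ne_aux j (fun c => M c c), hMj j, sub_zero]
    have hexp : ∑ c, M c c
        = (∑ c, K c c) - (1 / h j) * (∑ c, K c j * h c) - (1 / h j) * (∑ c, K j c * h c)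
          + K j j / h j ^ 2 * ∑ c, h c ^ 2 := by
      calc ∑ c, M c c
          = ∑ c, (K c c - (1 / h j) * (K c j * h c) - (1 / h j) * (K j c * h c)
              + K j j / h j ^ 2 * h c ^ 2) :=
            Finset.sum_congr rfl fun c _ => by rw [hMapp]; ring
        _ = _ := by
            rw [Finset.sum_add_distrib, Finset.sum_sub_distrib, Finset.sum_sub_distrib,
              Finset.mul_sum, Finset.mul_sum, Finset.mul_sum]
    rw [hexp, hKth' j, hKh' j, hnorm]
    have : K.trace = ∑ c, K c c := rfl
    rw [this]
    ring
  -- the averaging bound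
  have hmain : K j j / h j ^ 2 ≤ (1 + ζ) * K.trace := by
    have h1 : K j j / h j ^ 2 = ∑ i, h i ^ 2 * (K j j / h j ^ 2) := by
      rw [← Finset.sum_mul, hnorm, one_mul]
    have h2 : ∀ i, h i ^ 2 * (K j j / h j ^ 2) ≤ (1 + ζ) * K i i := by
      intro i
      have hi0 : h i ≠ 0 := (hpos i).ne'
      have := mul_le_mul_of_nonneg_left (hj i) (sq_nonneg (h i))
      calc h i ^ 2 * (K j j / h j ^ 2) ≤ h i ^ 2 * ((1 + ζ) * (K i i / h i ^ 2)) := this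
      _ = (1 + ζ) * K i i := by field_simp
    calc K j j / h j ^ 2 = ∑ i, h i ^ 2 * (K j j / h j ^ 2) := h1
    _ ≤ ∑ i, (1 + ζ) * K i i := Finset.sum_le_sum fun i _ => h2 i
    _ = (1 + ζ) * ∑ i, K i i := by rw [← Finset.mul_sum]
    _ = (1 + ζ) * K.trace := rfl
  constructor
  · rw [hinv, htr]
    linarith
  · linarith
end
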